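/- If 1 belongs to the forward orbit of a positive integer m under the Collatz function and m is not a power of 2, then m has property R: there exist k ∈ ℕ and naturals a_0 ≤ a_1 ≤ ⋯ ≤ a_{k+1} with 3^(k+1)·m = 2^(a_{k+1}) - ∑_{i=0}^{k} 2^(a_i)·3^(k-i). -/

import Mathlib

def T (n : ℕ) : ℕ := if n % 2 = 0 then n / 2 else 3 * n + 1

def PropR (m : ℕ) : Prop :=
  ∃ k : ℕ, ∃ a : ℕ → ℕ,
    (∀ i, i ≤ k → a i ≤ a (i + 1)) ∧
    (3 : ℤ) ^ (k + 1) * m =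
      2 ^ a (k + 1) - ∑ i ∈ Finset.range (k + 1), 2 ^ a i * 3 ^ (k - i)

lemma propR_double (m : ℕ) (h : PropR m) : PropR (2 * m) := by
  obtain ⟨k, a, hmono, heq⟩ := h
  refine ⟨k, fun i => a i + 1, fun i hi => by simpa using hmono i hi, ?_⟩
  have h2 : (3:ℤ)^(k+1) * ((2*m : ℕ) : ℤ) = 2 * ((3:ℤ)^(k+1) * m) := by
    push_cast; ring
  rw [h2, heq, mul_sub, Finset.mul_sum]
  congr 1
  · rw [pow_succ]; ring
  · exact Finset.sum_congr rfl fun i _ => by rw [pow_succ]; ring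

lemma propR_base (m c : ℕ) (h : 3 * m + 1 = 2 ^ c) : PropR m := by
  refine ⟨0, fun i => if i = 0 then 0 else c, fun i hi => by simp_all, ?_⟩
  have : ((3 * m + 1 : ℕ) : ℤ) = 2 ^ c := by exact_mod_cast congrArg (Nat.cast : ℕ → ℤ) h
  push_cast at this
  simp [Finset.sum_range_one]
  linarith

lemma propR_odd (m : ℕ) (h : PropR (3 * m + 1)) : PropR m := by
  obtain ⟨k, a, hmono, heq⟩ := h
  refine ⟨k + 1, fun i => if i = 0 then 0 else a (i - 1), ?_, ?_⟩
  · intro i hi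
    cases i with
    | zero => simp
    | succ j =>
      simp only [Nat.succ_ne_zero, if_false, Nat.add_sub_cancel]
      exact hmono j (Nat.le_of_succ_le_succ hi)
  · push_cast at heq
    have hsum : ∑ i ∈ Finset.range (k + 2),
        (2:ℤ) ^ (if i = 0 then 0 else a (i - 1)) * 3 ^ (k + 1 - i)
        = (∑ i ∈ Finset.range (k + 1), (2:ℤ) ^ a i * 3 ^ (k - i)) + 3 ^ (k + 1) := by
      rw [Finset.sum_range_succ']
      congr 1
      · exact Finset.sum_congr rfl fun i _ => by simp [Nat.succ_sub_succ]
      · simp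
    simp only [Nat.add_sub_cancel, if_neg (Nat.succ_ne_zero (k + 1))]
    rw [hsum]
    have : (3:ℤ)^(k+1+1) * m = 3^(k+1) * (3 * m + 1) - 3^(k+1) := by ring
    rw [this, heq]
    ring

theorem stmt14 (m : ℕ) (hm : 0 < m) (h1 : ∃ j : ℕ, T^[j] m = 1)
    (hpow : ∀ j : ℕ, m ≠ 2 ^ j) : PropR m := by
  obtain ⟨j, hj⟩ := h1
  induction j using Nat.strong_induction_on generalizing m with
  | _ j ih =>
    cases j with
    | zero =>
      simp only [Function.iterate_zero, id] at hj
      exact absurd hj (by simpa using hpow 0)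
    | succ j' =>
      rw [Function.iterate_succ_apply] at hj
      rcases Nat.even_or_odd m with he | ho
      · obtain ⟨m', hm'⟩ := he
        have hmm : m = 2 * m' := by omega
        have hT : T m = m' := by
          simp [T, hmm, Nat.mul_div_cancel_left, Nat.mul_mod_right]
        rw [hT] at hj
        have hm'pos : 0 < m' := by omega
        have hpow' : ∀ i : ℕ, m' ≠ 2 ^ i := by
          intro i hi
          exact hpow (i + 1) (by rw [hmm, hi, pow_succ]; ring)
        exact hmm ▸ propR_double m' (ih j' (Nat.lt_succ_self _) m' hm'pos hpow' hj)
      · have hT : T m = 3 * m + 1 := by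
          simp [T, Nat.odd_iff.mp ho]
        rw [hT] at hj
        by_cases hp : ∃ c : ℕ, 3 * m + 1 = 2 ^ c
        · obtain ⟨c, hc⟩ := hp
          exact propR_base m c hc
        · push_neg at hp
          exact propR_odd m (ih j' (Nat.lt_succ_self _) (3 * m + 1) (by omega) hp hj)
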